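/- A vertical line V_x = {x}×ℤ is complete in Γ_k if and only if every base-3 digit x_i of x with i < k lies in {0,2}; consequently Γ_k has exactly 2^k complete vertical lines and, by symmetry, exactly 2^k complete horizontal lines. -/

import Mathlib

open scoped Classical

/-- Reachability within the subgraph of `X` induced on a vertex set `s`. -/
def SimpleGraph.ReachIn {V : Type*} (X : SimpleGraph V) (s : Set V) (v w : V) : Prop :=
  ∃ (hv : v ∈ s) (hw : w ∈ s), (X.induce s).Reachable ⟨v, hv⟩ ⟨w, hw⟩

/-- The vertex set of the connected component of `v` in the subgraph of `X` induced on `s`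
(empty if `v ∉ s`). -/
def SimpleGraph.compIn {V : Type*} (X : SimpleGraph V) (s : Set V) (v : V) : Set V :=
  {w | X.ReachIn s v w}

/-- `T` is a vertex set witnessing `cut¹ᐟ²` for the subgraph of `X` induced on the finite
vertex set `G`: after removing `T` from `G`, every connected component has at most
`|G|/2` vertices. -/
def IsHalfCutSet {V : Type*} (X : SimpleGraph V) (G T : Finset V) : Prop :=
  T ⊆ G ∧ ∀ v : V, 2 * (X.compIn (↑(G \ T)) v).ncard ≤ G.card

/-- `cut¹ᐟ²` of the subgraph of `X` induced on the finite vertex set `G`: the least size of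
a vertex set whose removal leaves all connected components of size at most `|G|/2`. -/
noncomputable def cutHalf {V : Type*} (X : SimpleGraph V) (G : Finset V) : ℕ :=
  sInf {t | ∃ T : Finset V, IsHalfCutSet X G T ∧ T.card = t}

/-- The `1/2`-separation profile of `X`, over finite subgraphs with vertex set inside `W`. -/
noncomputable def sepHalf {V : Type*} (X : SimpleGraph V) (W : Set V) (n : ℕ) : ℕ :=
  sSup {c | ∃ G : Finset V, ↑G ⊆ W ∧ G.card ≤ n ∧ c = cutHalf X G}

/-- The `i`-th digit of `x` in base `b`. -/
def digit (b i x : ℕ) : ℕ := x / b ^ i % b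

/-- Membership in the vertex set of the infinite Sierpinski graph: no position at which
both coordinates have base-3 digit `1`. -/
def SierpMem (p : ℕ × ℕ) : Prop :=
  ∀ i : ℕ, ¬(digit 3 i p.1 = 1 ∧ digit 3 i p.2 = 1)

/-- The infinite Sierpinski graph `S`, with edges between valid points at `ℓ¹`-distance 1. -/
def SierpGraph : SimpleGraph (ℕ × ℕ) where
  Adj p q := SierpMem p ∧ SierpMem q ∧ |(p.1 : ℤ) - q.1| + |(p.2 : ℤ) - q.2| = 1
  symm := by
    refine ⟨?_⟩
    rintro p q ⟨hp, hq, h⟩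
    exact ⟨hq, hp, by
      rw [abs_sub_comm (q.1 : ℤ) (p.1 : ℤ), abs_sub_comm (q.2 : ℤ) (p.2 : ℤ)]; exact h⟩
  loopless := by refine ⟨?_⟩; rintro p ⟨-, -, h⟩; simp at h

/-- The vertex set of the sphere `Γ_k`. -/
noncomputable def GammaV (k : ℕ) : Finset (ℕ × ℕ) :=
  (Finset.range (3 ^ k) ×ˢ Finset.range (3 ^ k)).filter SierpMem

/-- The intersection of the vertical line `V_x` with `Γ_k`. -/
def VlineSet (k x : ℕ) : Set (ℕ × ℕ) := {p | p ∈ GammaV k ∧ p.1 = x}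

/-- The intersection of the horizontal line `H_y` with `Γ_k`. -/
def HlineSet (k y : ℕ) : Set (ℕ × ℕ) := {p | p ∈ GammaV k ∧ p.2 = y}

/-- The vertical line `V_x` is complete in `Γ_k`: its intersection with `Γ_k` is connected. -/
def CompleteV (k x : ℕ) : Prop := (SierpGraph.induce (VlineSet k x)).Connected

/-- The horizontal line `H_y` is complete in `Γ_k`: its intersection with `Γ_k` is connected. -/
def CompleteH (k y : ℕ) : Prop := (SierpGraph.induce (HlineSet k y)).Connected

/-- The vertex set of the complete-lines subgraph `C_k` of `Γ_k`. -/
noncomputable def CkV (k : ℕ) : Finset (ℕ × ℕ) :=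
  (GammaV k).filter fun p => CompleteV k p.1 ∨ CompleteH k p.2
section AuxDigits

lemma digit_lt3 (i x : ℕ) : digit 3 i x < 3 := Nat.mod_lt _ (by norm_num)

lemma digit_zero (b i : ℕ) : digit b i 0 = 0 := by simp [digit]

lemma digit_high {i k x : ℕ} (hx : x < 3 ^ k) (hik : k ≤ i) : digit 3 i x = 0 := by
  have h : x < 3 ^ i := lt_of_lt_of_le hx (Nat.pow_le_pow_right (by norm_num) hik)
  simp [digit, Nat.div_eq_of_lt h]

lemma digit_pow (i : ℕ) : digit 3 i (3 ^ i) = 1 := by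
  simp [digit, Nat.div_self (Nat.pow_pos (n := i) (by norm_num) : 0 < 3 ^ i)]

lemma digit_two_pow (i j : ℕ) : digit 3 j (2 * 3 ^ i) = if j = i then 2 else 0 := by
  rcases lt_trichotomy j i with h | h | h
  · have h3 : (3:ℕ) ^ i = 3 ^ j * 3 ^ (i - j) := by
      rw [← pow_add]; congr 1; omega
    simp only [if_neg h.ne, digit, h3]
    rw [show 2 * (3 ^ j * 3 ^ (i - j)) = 2 * 3 ^ (i - j) * 3 ^ j by ring,
      Nat.mul_div_cancel _ (Nat.pow_pos (n := j) (by norm_num))]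
    have h4 : (3:ℕ) ^ (i - j) = 3 * 3 ^ (i - j - 1) := by
      rw [← pow_succ']; congr 1; omega
    rw [h4]; omega
  · subst h
    simp [digit, Nat.mul_div_cancel _ (Nat.pow_pos (n := j) (by norm_num) : 0 < 3^j)]
  · have hlt : 2 * 3 ^ i < 3 ^ j := by
      calc 2 * 3 ^ i < 3 * 3 ^ i := by
            have := Nat.pow_pos (n := i) (show 0 < 3 by norm_num); omega
        _ = 3 ^ (i + 1) := (pow_succ' 3 i).symm
        _ ≤ 3 ^ j := Nat.pow_le_pow_right (by norm_num) (by omega)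
    simp [digit, Nat.div_eq_of_lt hlt, if_neg h.ne']

lemma digit_succ (i x : ℕ) : digit 3 (i + 1) x = digit 3 i (x / 3) := by
  simp [digit, Nat.div_div_eq_div_mul, pow_succ']

lemma digit_zero_idx (x : ℕ) : digit 3 0 x = x % 3 := by simp [digit]

end AuxDigits

section AuxGraph

lemma mem_Vline {k x : ℕ} {p : ℕ × ℕ} :
    p ∈ VlineSet k x ↔ p.1 = x ∧ p.2 < 3 ^ k ∧ x < 3 ^ k ∧ SierpMem p := by
  simp only [VlineSet, GammaV, Set.mem_setOf_eq, Finset.mem_filter, Finset.mem_product,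
    Finset.mem_range]
  constructor
  · rintro ⟨⟨⟨h1, h2⟩, h3⟩, h4⟩; exact ⟨h4, h2, h4 ▸ h1, h3⟩
  · rintro ⟨h1, h2, h3, h4⟩; exact ⟨⟨⟨h1 ▸ h3, h2⟩, h4⟩, h1⟩

lemma mem_Vline_of {k x y : ℕ} (hx : x < 3 ^ k) (hy : y < 3 ^ k) (hs : SierpMem (x, y)) :
    (x, y) ∈ VlineSet k x :=
  mem_Vline.2 ⟨rfl, hy, hx, hs⟩

lemma sierp_of_col {x : ℕ} (hx : ∀ i, digit 3 i x ≠ 1) (y : ℕ) : SierpMem (x, y) :=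
  fun i h => hx i h.1

lemma adj_vert {x y : ℕ} (h1 : SierpMem (x, y)) (h2 : SierpMem (x, y + 1)) :
    SierpGraph.Adj (x, y + 1) (x, y) := by
  refine ⟨h2, h1, ?_⟩
  simp only []
  push_cast
  rw [sub_self, abs_zero, zero_add, show ((y:ℤ) + 1 - y) = 1 by ring, abs_one]

-- reaching (x,0) in a fully complete column
lemma reach_zero {k x : ℕ} (hx : x < 3 ^ k) (hd : ∀ i, digit 3 i x ≠ 1) :
    ∀ n, (hn : n < 3 ^ k) →
      (SierpGraph.induce (VlineSet k x)).Reachable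
        ⟨(x, n), mem_Vline_of hx hn (sierp_of_col hd n)⟩
        ⟨(x, 0), mem_Vline_of hx (Nat.pow_pos (n := k) (by norm_num)) (sierp_of_col hd 0)⟩ := by
  intro n
  induction n with
  | zero => intro _; rfl
  | succ m ih =>
    intro hn
    have hm : m < 3 ^ k := by omega
    have hadj : (SierpGraph.induce (VlineSet k x)).Adj
        ⟨(x, m + 1), mem_Vline_of hx hn (sierp_of_col hd (m+1))⟩
        ⟨(x, m), mem_Vline_of hx hm (sierp_of_col hd m)⟩ := by
      exact adj_vert (sierp_of_col hd m) (sierp_of_col hd (m+1))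
    exact hadj.reachable.trans (ih hm)

lemma completeV_of (k x : ℕ) (hx : x < 3 ^ k) (hd : ∀ i, digit 3 i x ≠ 1) :
    CompleteV k x := by
  unfold CompleteV
  haveI : Nonempty (VlineSet k x) :=
    ⟨⟨(x, 0), mem_Vline_of hx (Nat.pow_pos (n := k) (by norm_num)) (sierp_of_col hd 0)⟩⟩
  refine SimpleGraph.Connected.mk ?_
  rintro ⟨⟨a1, a2⟩, ha⟩ ⟨⟨b1, b2⟩, hb⟩
  obtain ⟨ha1, ha2, -, has⟩ := mem_Vline.1 ha
  obtain ⟨hb1, hb2, -, hbs⟩ := mem_Vline.1 hb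
  subst ha1; subst hb1
  have r1 := reach_zero hx hd a2 ha2
  have r2 := reach_zero hx hd b2 hb2
  exact r1.trans r2.symm

lemma walk_invariant {k x i : ℕ} (hxi : digit 3 i x = 1) :
    ∀ {u v : VlineSet k x}, (SierpGraph.induce (VlineSet k x)).Walk u v →
      u.val.2 < 3 ^ i → v.val.2 < 3 ^ i := by
  intro u v w
  induction w with
  | nil => exact id
  | @cons a b c h p ih =>
    intro hu
    apply ih
    obtain ⟨ha1, -, -, -⟩ := mem_Vline.1 a.2
    obtain ⟨hb1, -, -, hbs⟩ := mem_Vline.1 b.2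
    obtain ⟨-, -, habs⟩ := h
    simp only [Function.Embedding.coe_subtype] at habs
    rw [ha1, hb1, sub_self, abs_zero, zero_add] at habs
    have hcase : b.val.2 = a.val.2 + 1 ∨ b.val.2 + 1 = a.val.2 := by
      rcases abs_eq (by norm_num : (0:ℤ) ≤ 1) |>.1 habs with h' | h' <;> [right; left] <;> omega
    rcases hcase with h' | h'
    · rcases Nat.lt_or_ge b.val.2 (3 ^ i) with h'' | h''
      · exact h''
      · exfalso
        have hb2 : b.val.2 = 3 ^ i := by omega
        refine hbs i ⟨?_, ?_⟩
        · rw [hb1]; exact hxi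
        · rw [show (b.val.2) = 3 ^ i from hb2]; exact digit_pow i
    · omega

lemma completeV_iff (k x : ℕ) :
    CompleteV k x ↔ x < 3 ^ k ∧ ∀ i < k, digit 3 i x = 0 ∨ digit 3 i x = 2 := by
  constructor
  · intro h
    obtain ⟨⟨p, hp⟩⟩ := h.nonempty
    obtain ⟨-, -, hx, -⟩ := mem_Vline.1 hp
    refine ⟨hx, ?_⟩
    by_contra hcon
    push_neg at hcon
    obtain ⟨i, hik, h0, h2⟩ := hcon
    have hxi : digit 3 i x = 1 := by have := digit_lt3 i x; omega
    have hm0 : (x, 0) ∈ VlineSet k x :=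
      mem_Vline_of hx (Nat.pow_pos (n := k) (by norm_num))
        (fun j hj => by simp [digit_zero] at hj)
    have h2lt : 2 * 3 ^ i < 3 ^ k := by
      calc 2 * 3 ^ i < 3 * 3 ^ i := by
            have := Nat.pow_pos (n := i) (show 0 < 3 by norm_num); omega
        _ = 3 ^ (i + 1) := (pow_succ' 3 i).symm
        _ ≤ 3 ^ k := Nat.pow_le_pow_right (by norm_num) (by omega)
    have hm2 : (x, 2 * 3 ^ i) ∈ VlineSet k x :=
      mem_Vline_of hx h2lt
        (fun j hj => by
          have := digit_two_pow i j
          rcases hj with ⟨-, hj2⟩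
          simp only [] at hj2
          rw [this] at hj2
          split_ifs at hj2 <;> omega)
    have hreach := h.preconnected ⟨(x, 0), hm0⟩ ⟨(x, 2 * 3 ^ i), hm2⟩
    obtain ⟨w⟩ := hreach
    have := walk_invariant hxi w (by positivity)
    simp only [] at this
    have h3i := Nat.pow_pos (n := i) (show 0 < 3 by norm_num)
    omega
  · rintro ⟨hx, hd⟩
    refine completeV_of k x hx (fun i => ?_)
    rcases Nat.lt_or_ge i k with h | h
    · rcases hd i h with h' | h' <;> omega
    · rw [digit_high hx h]; omega

end AuxGraph
section Swap

lemma sierpMem_swap {p : ℕ × ℕ} (h : SierpMem p) : SierpMem p.swap :=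
  fun i hi => h i ⟨hi.2, hi.1⟩

lemma adj_swap {p q : ℕ × ℕ} (h : SierpGraph.Adj p q) : SierpGraph.Adj p.swap q.swap := by
  obtain ⟨hp, hq, habs⟩ := h
  refine ⟨sierpMem_swap hp, sierpMem_swap hq, ?_⟩
  simp only [Prod.fst_swap, Prod.snd_swap]
  rw [add_comm]; exact habs

lemma mem_Hline {k y : ℕ} {p : ℕ × ℕ} :
    p ∈ HlineSet k y ↔ p.2 = y ∧ p.1 < 3 ^ k ∧ y < 3 ^ k ∧ SierpMem p := by
  simp only [HlineSet, GammaV, Set.mem_setOf_eq, Finset.mem_filter, Finset.mem_product,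
    Finset.mem_range]
  constructor
  · rintro ⟨⟨⟨h1, h2⟩, h3⟩, h4⟩; exact ⟨h4, h1, h4 ▸ h2, h3⟩
  · rintro ⟨h1, h2, h3, h4⟩; exact ⟨⟨⟨h2, h1 ▸ h3⟩, h4⟩, h1⟩

lemma swap_mem_Hline {k t : ℕ} {p : ℕ × ℕ} (h : p ∈ VlineSet k t) :
    p.swap ∈ HlineSet k t := by
  obtain ⟨h1, h2, h3, h4⟩ := mem_Vline.1 h
  exact mem_Hline.2 ⟨h1, h2, h3, sierpMem_swap h4⟩

lemma swap_mem_Vline {k t : ℕ} {p : ℕ × ℕ} (h : p ∈ HlineSet k t) :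
    p.swap ∈ VlineSet k t := by
  obtain ⟨h1, h2, h3, h4⟩ := mem_Hline.1 h
  exact mem_Vline.2 ⟨h1, h2, h3, sierpMem_swap h4⟩

noncomputable def swapIso (k t : ℕ) :
    SimpleGraph.induce (VlineSet k t) SierpGraph ≃g
      SimpleGraph.induce (HlineSet k t) SierpGraph where
  toFun p := ⟨p.val.swap, swap_mem_Hline p.2⟩
  invFun p := ⟨p.val.swap, swap_mem_Vline p.2⟩
  left_inv p := Subtype.ext (Prod.swap_swap _)
  right_inv p := Subtype.ext (Prod.swap_swap _)
  map_rel_iff' := by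
    intro a b
    constructor
    · intro h
      have := adj_swap h
      simpa [Prod.swap_swap] using this
    · intro h
      exact adj_swap h

lemma completeH_iff_completeV (k y : ℕ) : CompleteH k y ↔ CompleteV k y :=
  ((swapIso k y).connected_iff).symm

end Swap

section Counting

noncomputable def goodF (k : ℕ) : Finset ℕ :=
  (Finset.range (3 ^ k)).filter fun x => ∀ i < k, digit 3 i x = 0 ∨ digit 3 i x = 2

lemma mem_goodF {k x : ℕ} :
    x ∈ goodF k ↔ x < 3 ^ k ∧ ∀ i < k, digit 3 i x = 0 ∨ digit 3 i x = 2 := by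
  simp [goodF]

lemma mem_goodF_succ {k x : ℕ} :
    x ∈ goodF (k + 1) ↔ (x % 3 = 0 ∨ x % 3 = 2) ∧ x / 3 ∈ goodF k := by
  rw [mem_goodF, mem_goodF]
  have hpow : (3:ℕ) ^ (k + 1) = 3 ^ k * 3 := pow_succ 3 k
  constructor
  · rintro ⟨hx, hd⟩
    refine ⟨by simpa [digit_zero_idx] using hd 0 (Nat.succ_pos k), ?_, ?_⟩
    · rw [Nat.div_lt_iff_lt_mul (by norm_num)]; omega
    · intro i hi
      rw [← digit_succ]
      exact hd (i + 1) (by omega)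
  · rintro ⟨h0, hlt, hd⟩
    rw [Nat.div_lt_iff_lt_mul (by norm_num)] at hlt
    refine ⟨by omega, ?_⟩
    intro i hi
    match i with
    | 0 => rw [digit_zero_idx]; exact h0
    | (j + 1) => rw [digit_succ]; exact hd j (by omega)

lemma goodF_card (k : ℕ) : (goodF k).card = 2 ^ k := by
  induction k with
  | zero =>
    have h : goodF 0 = {0} := by
      ext x
      rw [mem_goodF]
      simp only [pow_zero, Nat.lt_one_iff, Finset.mem_singleton]
      constructor
      · rintro ⟨h, -⟩; exact h
      · rintro rfl; exact ⟨rfl, fun i hi => by omega⟩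
    rw [h]; rfl
  | succ k ih =>
    have heq : goodF (k + 1) =
        (goodF k).image (fun a => 3 * a) ∪ (goodF k).image (fun a => 3 * a + 2) := by
      ext x
      rw [mem_goodF_succ]
      simp only [Finset.mem_union, Finset.mem_image]
      constructor
      · rintro ⟨h0 | h2, hx⟩
        · exact Or.inl ⟨x / 3, hx, by omega⟩
        · exact Or.inr ⟨x / 3, hx, by omega⟩
      · rintro (⟨a, ha, rfl⟩ | ⟨a, ha, rfl⟩)
        · exact ⟨Or.inl (by omega), by rw [show 3 * a / 3 = a by omega]; exact ha⟩
        · exact ⟨Or.inr (by omega), by rw [show (3 * a + 2) / 3 = a by omega]; exact ha⟩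
    have hdisj : Disjoint ((goodF k).image (fun a => 3 * a))
        ((goodF k).image (fun a => 3 * a + 2)) := by
      rw [Finset.disjoint_left]
      rintro x hx hx'
      simp only [Finset.mem_image] at hx hx'
      obtain ⟨a, -, rfl⟩ := hx
      obtain ⟨b, -, hb⟩ := hx'
      omega
    rw [heq, Finset.card_union_of_disjoint hdisj,
      Finset.card_image_of_injective _ (fun a b h => by omega),
      Finset.card_image_of_injective _ (fun a b h => by omega), ih, pow_succ]
    ring

end Counting

/-- A vertical line `V_x` is complete in `Γ_k` iff `x < 3^k` and every base-3 digit of `x`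
below position `k` lies in `{0,2}`; consequently `Γ_k` has exactly `2^k` complete vertical
lines and `2^k` complete horizontal lines. -/
theorem complete_lines_characterization (k : ℕ) :
    (∀ x : ℕ, CompleteV k x ↔
      x < 3 ^ k ∧ ∀ i < k, digit 3 i x = 0 ∨ digit 3 i x = 2) ∧
    {x : ℕ | CompleteV k x}.ncard = 2 ^ k ∧
    {y : ℕ | CompleteH k y}.ncard = 2 ^ k := by
  refine ⟨completeV_iff k, ?_, ?_⟩
  · have h : {x : ℕ | CompleteV k x} = ↑(goodF k) := by
      ext x
      simp [completeV_iff, mem_goodF]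
    rw [h, Set.ncard_coe_finset, goodF_card]
  · have h : {y : ℕ | CompleteH k y} = ↑(goodF k) := by
      ext y
      simp [completeH_iff_completeV, completeV_iff, mem_goodF]
    rw [h, Set.ncard_coe_finset, goodF_card]
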